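/- For integers k ≥ 1 and l, the group Γ_{k,l} is isomorphic to a semidirect product ℤ^3 ⋊_θ ℤ, where ℤ^3 is the free abelian group on the images of z, x, t, the ℤ factor is generated by y acting by conjugation, and the generator of ℤ acts on ℤ^3 (in the ordered basis z, x, t) by the unipotent matrix !![1, -1, -l; 0, 1, -k; 0, 0, 1]. -/

import Mathlib

namespace Stmt3

/-- The free group generators `x, y, z, t` for the `Nil⁴` group. -/
private abbrev gx : FreeGroup (Fin 4) := FreeGroup.of 0
private abbrev gy : FreeGroup (Fin 4) := FreeGroup.of 1
private abbrev gz : FreeGroup (Fin 4) := FreeGroup.of 2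
private abbrev gt : FreeGroup (Fin 4) := FreeGroup.of 3

/-- The relators of the presentation
`⟨x, y, z, t | t x t⁻¹ = x, t y t⁻¹ = xᵏ y zˡ, t z t⁻¹ = z, [x,y] = z, xz = zx, yz = zy⟩`. -/
def nilRels (k l : ℤ) : Set (FreeGroup (Fin 4)) :=
  { gt * gx * gt⁻¹ * gx⁻¹,
    gt * gy * gt⁻¹ * (gx ^ k * gy * gz ^ l)⁻¹,
    gt * gz * gt⁻¹ * gz⁻¹,
    gx * gy * gx⁻¹ * gy⁻¹ * gz⁻¹,
    gx * gz * gx⁻¹ * gz⁻¹,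
    gy * gz * gy⁻¹ * gz⁻¹ }

/-- `Γ k l`, the (finite index model of the) fundamental group of a closed `Nil⁴`-manifold. -/
abbrev Γ (k l : ℤ) : Type := PresentedGroup (nilRels k l)

/-- The images of the generators in `Γ k l`. -/
def xΓ (k l : ℤ) : Γ k l := PresentedGroup.of 0
def yΓ (k l : ℤ) : Γ k l := PresentedGroup.of 1
def zΓ (k l : ℤ) : Γ k l := PresentedGroup.of 2
def tΓ (k l : ℤ) : Γ k l := PresentedGroup.of 3

/-- The unipotent matrix `!![1, -1, -l; 0, 1, -k; 0, 0, 1]` describing the action of `y`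
on `ℤ³ = ⟨z, x, t⟩` (coordinates ordered as `z, x, t`). -/
def nilMatrix (k l : ℤ) : Matrix (Fin 3) (Fin 3) ℤ := !![1, -1, -l; 0, 1, -k; 0, 0, 1]

/-- The automorphism `θ` of `ℤ³` given by the matrix `nilMatrix k l`. -/
def θ (k l : ℤ) : (Fin 3 → ℤ) ≃+ (Fin 3 → ℤ) where
  toFun v := (nilMatrix k l).mulVec v
  invFun v := (!![1, 1, k + l; 0, 1, k; 0, 0, 1] : Matrix (Fin 3) (Fin 3) ℤ).mulVec v
  left_inv v := by
    funext i
    fin_cases i <;>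
      simp [nilMatrix, Matrix.mulVec, dotProduct, Fin.sum_univ_three, Matrix.vecHead,
        Matrix.vecTail, Function.comp] <;> ring
  right_inv v := by
    funext i
    fin_cases i <;>
      simp [nilMatrix, Matrix.mulVec, dotProduct, Fin.sum_univ_three, Matrix.vecHead,
        Matrix.vecTail, Function.comp] <;> ring
  map_add' u v := by simp [Matrix.mulVec_add]

/-- The action of the generator of `ℤ` (the image of `y`) on `ℤ³` through `θ`. -/
def nilAction (k l : ℤ) : Multiplicative ℤ →* MulAut (Multiplicative (Fin 3 → ℤ)) :=
  zpowersHom (MulAut (Multiplicative (Fin 3 → ℤ))) (AddEquiv.toMultiplicative (θ k l))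

/-- The semidirect product `ℤ³ ⋊_θ ℤ`. -/
abbrev NilSemidirect (k l : ℤ) : Type :=
  Multiplicative (Fin 3 → ℤ) ⋊[nilAction k l] Multiplicative ℤ

-- ==================== auxiliary development ====================

open Multiplicative SemidirectProduct

theorem theta_apply (k l : ℤ) (v : Fin 3 → ℤ) :
    θ k l v = ![v 0 - v 1 - l * v 2, v 1 - k * v 2, v 2] := by
  funext i
  fin_cases i <;>
    simp [θ, nilMatrix, Matrix.mulVec, dotProduct, Fin.sum_univ_three, Matrix.vecHead,
      Matrix.vecTail, Function.comp] <;> ring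

theorem ofAdd_dec (v : Fin 3 → ℤ) :
    (ofAdd v : Multiplicative (Fin 3 → ℤ)) =
      ofAdd (Pi.single 0 (v 0)) * ofAdd (Pi.single 1 (v 1)) * ofAdd (Pi.single 2 (v 2)) := by
  rw [← ofAdd_add, ← ofAdd_add]
  congr 1
  funext i
  fin_cases i <;> simp [Pi.single_apply]

theorem single_eq_zsmul (i : Fin 3) (n : ℤ) :
    Pi.single i n = n • (Pi.single i 1 : Fin 3 → ℤ) := by
  funext j
  by_cases h : j = i <;> simp [Pi.single_apply, h]

theorem mhom_ext {H : Type*} [Group H] {f g : Multiplicative (Fin 3 → ℤ) →* H}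
    (h : ∀ i : Fin 3, f (ofAdd (Pi.single i 1)) = g (ofAdd (Pi.single i 1))) : f = g := by
  have hv : ∀ (F : Multiplicative (Fin 3 → ℤ) →* H) (v : Fin 3 → ℤ),
      F (ofAdd v) = F (ofAdd (Pi.single 0 1)) ^ (v 0) * F (ofAdd (Pi.single 1 1)) ^ (v 1) *
        F (ofAdd (Pi.single 2 1)) ^ (v 2) := by
    intro F v
    rw [ofAdd_dec, map_mul, map_mul, single_eq_zsmul 0, single_eq_zsmul 1, single_eq_zsmul 2,
      ofAdd_zsmul, ofAdd_zsmul, ofAdd_zsmul, map_zpow, map_zpow, map_zpow]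
  apply MonoidHom.ext; intro m
  rw [← ofAdd_toAdd m, hv f, hv g, h 0, h 1, h 2]

section Rels
variable (k l : ℤ)

theorem relΓ {r : FreeGroup (Fin 4)} (hr : r ∈ nilRels k l) :
    PresentedGroup.mk (nilRels k l) r = 1 := by
  have h : r ∈ Subgroup.normalClosure (nilRels k l) := Subgroup.subset_normalClosure hr
  exact (QuotientGroup.eq_one_iff r).2 h

@[simp] theorem mk_gx : PresentedGroup.mk (nilRels k l) gx = xΓ k l := rfl
@[simp] theorem mk_gy : PresentedGroup.mk (nilRels k l) gy = yΓ k l := rfl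
@[simp] theorem mk_gz : PresentedGroup.mk (nilRels k l) gz = zΓ k l := rfl
@[simp] theorem mk_gt : PresentedGroup.mk (nilRels k l) gt = tΓ k l := rfl

theorem ctx : Commute (tΓ k l) (xΓ k l) := by
  rw [← commutatorElement_eq_one_iff_commute, commutatorElement_def]
  have h := relΓ k l (r := gt * gx * gt⁻¹ * gx⁻¹) (by simp [nilRels])
  simpa using h

theorem ctz : Commute (tΓ k l) (zΓ k l) := by
  rw [← commutatorElement_eq_one_iff_commute, commutatorElement_def]
  have h := relΓ k l (r := gt * gz * gt⁻¹ * gz⁻¹) (by simp [nilRels])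
  simpa using h

theorem cxz : Commute (xΓ k l) (zΓ k l) := by
  rw [← commutatorElement_eq_one_iff_commute, commutatorElement_def]
  have h := relΓ k l (r := gx * gz * gx⁻¹ * gz⁻¹) (by simp [nilRels])
  simpa using h

theorem cyz : Commute (yΓ k l) (zΓ k l) := by
  rw [← commutatorElement_eq_one_iff_commute, commutatorElement_def]
  have h := relΓ k l (r := gy * gz * gy⁻¹ * gz⁻¹) (by simp [nilRels])
  simpa using h

theorem rel2Γ : tΓ k l * yΓ k l * (tΓ k l)⁻¹ = (xΓ k l) ^ k * yΓ k l * (zΓ k l) ^ l := by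
  have h := relΓ k l (r := gt * gy * gt⁻¹ * (gx ^ k * gy * gz ^ l)⁻¹) (by simp [nilRels])
  simp only [map_mul, map_inv, map_zpow, mk_gx, mk_gy, mk_gz, mk_gt] at h
  rwa [mul_inv_eq_one] at h

theorem rel4Γ : xΓ k l * yΓ k l * (xΓ k l)⁻¹ * (yΓ k l)⁻¹ = zΓ k l := by
  have h := relΓ k l (r := gx * gy * gx⁻¹ * gy⁻¹ * gz⁻¹) (by simp [nilRels])
  simp only [map_mul, map_inv, mk_gx, mk_gy, mk_gz] at h
  rwa [mul_inv_eq_one] at h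

theorem cyx_conj : yΓ k l * xΓ k l * (yΓ k l)⁻¹ = (zΓ k l)⁻¹ * xΓ k l := by
  have h4 := rel4Γ k l
  have hxy : xΓ k l * yΓ k l = zΓ k l * (yΓ k l * xΓ k l) := by
    calc xΓ k l * yΓ k l
        = (xΓ k l * yΓ k l * (xΓ k l)⁻¹ * (yΓ k l)⁻¹) * (yΓ k l * xΓ k l) := by group
      _ = zΓ k l * (yΓ k l * xΓ k l) := by rw [h4]
  have hyx : yΓ k l * xΓ k l = (zΓ k l)⁻¹ * (xΓ k l * yΓ k l) := by
    rw [hxy]; group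
  rw [hyx]; group

theorem cyt_conj : yΓ k l * tΓ k l * (yΓ k l)⁻¹ = (zΓ k l) ^ (-l) * (xΓ k l) ^ (-k) * tΓ k l := by
  have h2 := rel2Γ k l
  have hty : tΓ k l * yΓ k l = (xΓ k l) ^ k * (yΓ k l * (zΓ k l) ^ l) * tΓ k l := by
    calc tΓ k l * yΓ k l = (tΓ k l * yΓ k l * (tΓ k l)⁻¹) * tΓ k l := by group
      _ = _ := by rw [h2]; group
  have hyz : yΓ k l * (zΓ k l) ^ l = (zΓ k l) ^ l * yΓ k l := ((cyz k l).zpow_right l).eq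
  have hty' : tΓ k l * yΓ k l = (xΓ k l) ^ k * (zΓ k l) ^ l * (yΓ k l * tΓ k l) := by
    rw [hty, hyz]; group
  have : yΓ k l * tΓ k l = (zΓ k l) ^ (-l) * (xΓ k l) ^ (-k) * (tΓ k l * yΓ k l) := by
    rw [hty']; group
  rw [this]; group

end Rels

section FM
variable (k l : ℤ)

def genΓ : Fin 3 → Γ k l := ![zΓ k l, xΓ k l, tΓ k l]

theorem genΓ_comm (i j : Fin 3) : Commute (genΓ k l i) (genΓ k l j) := by
  fin_cases i <;> fin_cases j <;>
    simp only [genΓ, Matrix.cons_val_zero, Matrix.cons_val_one, Matrix.head_cons,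
      Matrix.cons_val_two, Matrix.tail_cons] <;>
    first
      | exact Commute.refl _
      | exact (cxz k l).symm
      | exact (ctz k l).symm
      | exact (ctx k l).symm
      | exact cxz k l
      | exact ctz k l
      | exact ctx k l

theorem genΓ_pair : Pairwise fun i j =>
    ∀ (m n : Multiplicative ℤ), Commute (zpowersHom (Γ k l) (genΓ k l i) m)
      (zpowersHom (Γ k l) (genΓ k l j) n) := by
  intro i j _ m n
  simp only [zpowersHom_apply]
  exact (genΓ_comm k l i j).zpow_zpow _ _

def fM : Multiplicative (Fin 3 → ℤ) →* Γ k l :=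
  (MonoidHom.noncommPiCoprod (fun i => zpowersHom (Γ k l) (genΓ k l i)) (genΓ_pair k l)).comp
    (MulEquiv.funMultiplicative (Fin 3) ℤ).toMonoidHom

theorem funMult_single (i : Fin 3) (n : ℤ) :
    (MulEquiv.funMultiplicative (Fin 3) ℤ) (ofAdd (Pi.single i n)) =
      Pi.mulSingle i (ofAdd n) := by
  funext j
  by_cases h : j = i <;>
    simp [MulEquiv.piMultiplicative, Pi.single_apply, Pi.mulSingle_apply, h]

theorem fM_single (i : Fin 3) (n : ℤ) :
    fM k l (ofAdd (Pi.single i n)) = genΓ k l i ^ n := by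
  rw [fM, MonoidHom.comp_apply, MulEquiv.coe_toMonoidHom, funMult_single,
    MonoidHom.noncommPiCoprod_mulSingle, zpowersHom_apply]
  rfl

theorem fM_apply (v : Fin 3 → ℤ) :
    fM k l (ofAdd v) = zΓ k l ^ (v 0) * xΓ k l ^ (v 1) * tΓ k l ^ (v 2) := by
  rw [ofAdd_dec, map_mul, map_mul, fM_single, fM_single, fM_single]
  rfl

end FM

section Compat
variable (k l : ℤ)

theorem e1 (m : Multiplicative (Fin 3 → ℤ)) :
    fM k l (AddEquiv.toMultiplicative (θ k l) m) = yΓ k l * fM k l m * (yΓ k l)⁻¹ := by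
  have key : (fM k l).comp (AddEquiv.toMultiplicative (θ k l) : Multiplicative (Fin 3 → ℤ) ≃*
        Multiplicative (Fin 3 → ℤ)).toMonoidHom =
      ((MulAut.conj (yΓ k l)).toMonoidHom.comp (fM k l)) := by
    apply mhom_ext
    intro i
    simp only [MonoidHom.comp_apply, MulEquiv.coe_toMonoidHom, MulAut.conj_apply]
    have happ : ∀ u : Fin 3 → ℤ,
        (AddEquiv.toMultiplicative (θ k l)) (ofAdd u) = ofAdd (θ k l u) := fun _ => rfl
    rw [happ]
    fin_cases i
    · show (fM k l) (ofAdd ((θ k l) (Pi.single 0 1))) =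
        yΓ k l * (fM k l) (ofAdd (Pi.single 0 1)) * (yΓ k l)⁻¹
      have h0 : θ k l (Pi.single 0 1) = Pi.single 0 1 := by
        rw [theta_apply]; funext j; fin_cases j <;> simp [Pi.single_apply]
      rw [h0, fM_single]
      have : Commute (yΓ k l) (genΓ k l 0 ^ (1:ℤ)) := by
        simpa [genΓ] using ((cyz k l).zpow_right 1)
      rw [this.eq]; group
    · show (fM k l) (ofAdd ((θ k l) (Pi.single 1 1))) =
        yΓ k l * (fM k l) (ofAdd (Pi.single 1 1)) * (yΓ k l)⁻¹
      have h1 : θ k l (Pi.single 1 1) = ![-1, 1, 0] := by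
        rw [theta_apply]; funext j; fin_cases j <;> simp [Pi.single_apply]
      rw [h1, fM_single]
      have happ2 : fM k l (ofAdd ![-1, 1, 0]) = (zΓ k l)⁻¹ * xΓ k l := by
        rw [fM_apply]
        norm_num [Matrix.cons_val_two, Matrix.tail_cons, Matrix.head_cons]
      rw [happ2]
      have := cyx_conj k l
      simpa [genΓ] using this.symm
    · show (fM k l) (ofAdd ((θ k l) (Pi.single 2 1))) =
        yΓ k l * (fM k l) (ofAdd (Pi.single 2 1)) * (yΓ k l)⁻¹
      have h2 : θ k l (Pi.single 2 1) = ![-l, -k, 1] := by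
        rw [theta_apply]; funext j; fin_cases j <;> simp [Pi.single_apply]
      rw [h2, fM_single]
      have happ2 : fM k l (ofAdd ![-l, -k, 1]) =
          (zΓ k l) ^ (-l) * (xΓ k l) ^ (-k) * tΓ k l := by
        rw [fM_apply]
        norm_num [Matrix.cons_val_two, Matrix.tail_cons, Matrix.head_cons]
      rw [happ2]
      have := cyt_conj k l
      simpa [genΓ] using this.symm
  exact DFunLike.congr_fun key m

theorem e1inv (m : Multiplicative (Fin 3 → ℤ)) :
    fM k l (((AddEquiv.toMultiplicative (θ k l) : MulAut (Multiplicative (Fin 3 → ℤ))))⁻¹ m) =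
      (yΓ k l)⁻¹ * fM k l m * yΓ k l := by
  have h := e1 k l (((AddEquiv.toMultiplicative (θ k l) : MulAut (Multiplicative (Fin 3 → ℤ))))⁻¹ m)
  have hm : (AddEquiv.toMultiplicative (θ k l))
      (((AddEquiv.toMultiplicative (θ k l) : MulAut (Multiplicative (Fin 3 → ℤ))))⁻¹ m) = m := by
    simp
  rw [hm] at h
  rw [h]; group

theorem compat_pointwise (n : ℤ) (m : Multiplicative (Fin 3 → ℤ)) :
    fM k l ((nilAction k l (ofAdd n)) m) = yΓ k l ^ n * fM k l m * (yΓ k l ^ n)⁻¹ := by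
  have key : ∀ n : ℤ, ∀ m, fM k l
      (((AddEquiv.toMultiplicative (θ k l) : MulAut (Multiplicative (Fin 3 → ℤ))) ^ n) m) =
      yΓ k l ^ n * fM k l m * (yΓ k l ^ n)⁻¹ := by
    intro n
    induction n using Int.induction_on with
    | zero => intro m; simp
    | succ i ih =>
        intro m
        have hsplit : ((AddEquiv.toMultiplicative (θ k l) : MulAut (Multiplicative (Fin 3 → ℤ))) ^
            ((i : ℤ) + 1)) m =
            ((AddEquiv.toMultiplicative (θ k l) : MulAut (Multiplicative (Fin 3 → ℤ))) ^ (i : ℤ))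
              ((AddEquiv.toMultiplicative (θ k l)) m) := by
          rw [zpow_add_one]
          rfl
        rw [hsplit, ih, e1]
        group
    | pred i ih =>
        intro m
        have hsplit : ((AddEquiv.toMultiplicative (θ k l) : MulAut (Multiplicative (Fin 3 → ℤ))) ^
            (-(i : ℤ) - 1)) m =
            ((AddEquiv.toMultiplicative (θ k l) : MulAut (Multiplicative (Fin 3 → ℤ))) ^ (-(i : ℤ)))
              ((((AddEquiv.toMultiplicative (θ k l) : MulAut (Multiplicative (Fin 3 → ℤ))))⁻¹) m) := by
          rw [sub_eq_add_neg, zpow_add, zpow_neg_one]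
          rfl
        rw [hsplit, ih, e1inv]
        group
  have hact : nilAction k l (ofAdd n) =
      (AddEquiv.toMultiplicative (θ k l) : MulAut (Multiplicative (Fin 3 → ℤ))) ^ n := by
    simp [nilAction]
  rw [hact]
  exact key n m

theorem compat (g : Multiplicative ℤ) :
    (fM k l).comp ((nilAction k l g).toMonoidHom) =
      (MulAut.conj ((zpowersHom (Γ k l) (yΓ k l)) g)).toMonoidHom.comp (fM k l) := by
  ext m
  simp only [MonoidHom.comp_apply, MulEquiv.coe_toMonoidHom, MulAut.conj_apply, zpowersHom_apply]
  have := compat_pointwise k l (Multiplicative.toAdd g) m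
  rwa [ofAdd_toAdd] at this

def ψhom : NilSemidirect k l →* Γ k l :=
  SemidirectProduct.lift (fM k l) (zpowersHom (Γ k l) (yΓ k l)) (compat k l)

end Compat

section Phi
variable (k l : ℤ)

def Fgen : Fin 4 → NilSemidirect k l :=
  ![inl (ofAdd (Pi.single 1 1)), inr (ofAdd 1), inl (ofAdd (Pi.single 0 1)),
    inl (ofAdd (Pi.single 2 1))]

theorem inl_mul' (u v : Fin 3 → ℤ) :
    (inl (ofAdd u) * inl (ofAdd v) : NilSemidirect k l) = inl (ofAdd (u + v)) := by
  rw [← map_mul]; rfl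

theorem inl_inv' (u : Fin 3 → ℤ) :
    ((inl (ofAdd u) : NilSemidirect k l))⁻¹ = inl (ofAdd (-u)) := by
  rw [← map_inv]; rfl

theorem inl_zpow' (u : Fin 3 → ℤ) (n : ℤ) :
    ((inl (ofAdd u) : NilSemidirect k l)) ^ n = inl (ofAdd (n • u)) := by
  rw [← map_zpow, ← ofAdd_zsmul]

theorem yl (u : Fin 3 → ℤ) :
    (inr (ofAdd 1) : NilSemidirect k l) * inl (ofAdd u) =
      inl (ofAdd (θ k l u)) * inr (ofAdd 1) := by
  have h : (inl ((nilAction k l (ofAdd 1)) (ofAdd u)) : NilSemidirect k l) =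
      inr (ofAdd 1) * inl (ofAdd u) * (inr (ofAdd 1))⁻¹ := by
    rw [← map_inv]
    exact inl_aut _ _
  have h2 : (nilAction k l (ofAdd (1:ℤ))) (ofAdd u) = ofAdd (θ k l u) := by
    simp [nilAction]
  rw [h2] at h
  rw [h]; group

end Phi

section PhiDef
variable (k l : ℤ)

@[simp] theorem Fgen0 : Fgen k l 0 = inl (ofAdd (Pi.single 1 1)) := rfl
@[simp] theorem Fgen1 : Fgen k l 1 = inr (ofAdd 1) := rfl
@[simp] theorem Fgen2 : Fgen k l 2 = inl (ofAdd (Pi.single 0 1)) := rfl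
@[simp] theorem Fgen3 : Fgen k l 3 = inl (ofAdd (Pi.single 2 1)) := rfl

theorem hrels : ∀ r ∈ nilRels k l, FreeGroup.lift (Fgen k l) r = 1 := by
  intro r hr
  rcases hr with h | h | h | h | h | h <;> subst h <;>
    simp only [map_mul, map_inv, map_zpow, FreeGroup.lift_apply_of, Fgen0, Fgen1, Fgen2, Fgen3]
  · -- T X T⁻¹ X⁻¹
    rw [inl_inv', inl_inv', inl_mul', inl_mul', inl_mul']
    have hv : Pi.single 2 1 + Pi.single 1 1 + -Pi.single 2 1 + -Pi.single 1 1
        = (0 : Fin 3 → ℤ) := by abel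
    rw [hv, ofAdd_zero, map_one]
  · -- T Y T⁻¹ (X^k Y Z^l)⁻¹
    rw [mul_inv_eq_one, inl_inv', inl_zpow', inl_zpow', mul_assoc _ (inr (ofAdd 1)),
      mul_assoc _ (inr (ofAdd 1)), yl, yl, ← mul_assoc, ← mul_assoc, inl_mul', inl_mul']
    have hv : Pi.single 2 1 + θ k l (-Pi.single 2 1)
        = k • Pi.single 1 1 + θ k l (l • Pi.single 0 1) := by
      rw [theta_apply, theta_apply]
      funext j
      fin_cases j <;>
        simp [Pi.single_apply, Matrix.vecHead, Matrix.vecTail] <;> ring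
    rw [hv]
  · -- T Z T⁻¹ Z⁻¹
    rw [inl_inv', inl_inv', inl_mul', inl_mul', inl_mul']
    have hv : Pi.single 2 1 + Pi.single 0 1 + -Pi.single 2 1 + -Pi.single 0 1
        = (0 : Fin 3 → ℤ) := by abel
    rw [hv, ofAdd_zero, map_one]
  · -- X Y X⁻¹ Y⁻¹ Z⁻¹
    rw [mul_inv_eq_one]
    calc (inl (ofAdd (Pi.single 1 1)) : NilSemidirect k l) * inr (ofAdd 1) *
          (inl (ofAdd (Pi.single 1 1)))⁻¹ * (inr (ofAdd 1))⁻¹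
        = (inl (ofAdd (Pi.single 1 1)) * inl (ofAdd (θ k l (-Pi.single 1 1)))) *
            (inr (ofAdd 1) * (inr (ofAdd 1))⁻¹) := by
          rw [inl_inv', mul_assoc _ (inr (ofAdd 1)), yl]; group
      _ = inl (ofAdd (Pi.single 1 1 + θ k l (-Pi.single 1 1))) := by
          rw [mul_inv_cancel, mul_one, inl_mul']
      _ = inl (ofAdd (Pi.single 0 1)) := by
          have hv : Pi.single 1 1 + θ k l (-Pi.single 1 1) = (Pi.single 0 1 : Fin 3 → ℤ) := by
            rw [theta_apply]
            funext j
            fin_cases j <;>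
              simp [Pi.single_apply, Matrix.vecHead, Matrix.vecTail]
          rw [hv]
  · -- X Z X⁻¹ Z⁻¹
    rw [inl_inv', inl_inv', inl_mul', inl_mul', inl_mul']
    have hv : Pi.single 1 1 + Pi.single 0 1 + -Pi.single 1 1 + -Pi.single 0 1
        = (0 : Fin 3 → ℤ) := by abel
    rw [hv, ofAdd_zero, map_one]
  · -- Y Z Y⁻¹ Z⁻¹
    calc (inr (ofAdd 1) : NilSemidirect k l) * inl (ofAdd (Pi.single 0 1)) *
          (inr (ofAdd 1))⁻¹ * (inl (ofAdd (Pi.single 0 1)))⁻¹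
        = inl (ofAdd (θ k l (Pi.single 0 1))) * (inr (ofAdd 1) * (inr (ofAdd 1))⁻¹) *
            inl (ofAdd (-Pi.single 0 1)) := by
          rw [yl, inl_inv']; group
      _ = inl (ofAdd (θ k l (Pi.single 0 1) + -Pi.single 0 1)) := by
          rw [mul_inv_cancel, mul_one, inl_mul']
      _ = 1 := by
          have hv : θ k l (Pi.single 0 1) + -Pi.single 0 1 = (0 : Fin 3 → ℤ) := by
            rw [theta_apply]
            funext j
            fin_cases j <;>
              simp [Pi.single_apply, Matrix.vecHead, Matrix.vecTail]
          rw [hv, ofAdd_zero, map_one]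

def φhom : Γ k l →* NilSemidirect k l := PresentedGroup.toGroup (hrels k l)

@[simp] theorem φ_x : φhom k l (xΓ k l) = inl (ofAdd (Pi.single 1 1)) :=
  PresentedGroup.toGroup.of _
@[simp] theorem φ_y : φhom k l (yΓ k l) = inr (ofAdd 1) :=
  PresentedGroup.toGroup.of _
@[simp] theorem φ_z : φhom k l (zΓ k l) = inl (ofAdd (Pi.single 0 1)) :=
  PresentedGroup.toGroup.of _
@[simp] theorem φ_t : φhom k l (tΓ k l) = inl (ofAdd (Pi.single 2 1)) :=
  PresentedGroup.toGroup.of _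

end PhiDef

section Final
variable (k l : ℤ)

theorem fM_s0 : fM k l (ofAdd (Pi.single 0 1)) = zΓ k l := by
  rw [fM_single]; simp [genΓ]
theorem fM_s1 : fM k l (ofAdd (Pi.single 1 1)) = xΓ k l := by
  rw [fM_single]; simp [genΓ]
theorem fM_s2 : fM k l (ofAdd (Pi.single 2 1)) = tΓ k l := by
  rw [fM_single]; simp [genΓ]

theorem ψφ : (ψhom k l).comp (φhom k l) = MonoidHom.id (Γ k l) := by
  apply PresentedGroup.ext
  intro i
  fin_cases i
  · show ψhom k l (φhom k l (xΓ k l)) = xΓ k l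
    rw [φ_x]
    show ψhom k l (inl (ofAdd (Pi.single 1 1))) = xΓ k l
    rw [ψhom, SemidirectProduct.lift_inl, fM_s1]
  · show ψhom k l (φhom k l (yΓ k l)) = yΓ k l
    rw [φ_y]
    show ψhom k l (inr (ofAdd 1)) = yΓ k l
    rw [ψhom, SemidirectProduct.lift_inr, zpowersHom_apply]
    simp
  · show ψhom k l (φhom k l (zΓ k l)) = zΓ k l
    rw [φ_z]
    show ψhom k l (inl (ofAdd (Pi.single 0 1))) = zΓ k l
    rw [ψhom, SemidirectProduct.lift_inl, fM_s0]
  · show ψhom k l (φhom k l (tΓ k l)) = tΓ k l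
    rw [φ_t]
    show ψhom k l (inl (ofAdd (Pi.single 2 1))) = tΓ k l
    rw [ψhom, SemidirectProduct.lift_inl, fM_s2]

theorem φψ : (φhom k l).comp (ψhom k l) = MonoidHom.id (NilSemidirect k l) := by
  apply SemidirectProduct.hom_ext
  · apply mhom_ext
    intro i
    simp only [MonoidHom.comp_apply, MonoidHom.id_apply]
    fin_cases i
    · show φhom k l (ψhom k l (inl (ofAdd (Pi.single 0 1)))) = inl (ofAdd (Pi.single 0 1))
      rw [ψhom, SemidirectProduct.lift_inl, fM_s0, φ_z]
    · show φhom k l (ψhom k l (inl (ofAdd (Pi.single 1 1)))) = inl (ofAdd (Pi.single 1 1))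
      rw [ψhom, SemidirectProduct.lift_inl, fM_s1, φ_x]
    · show φhom k l (ψhom k l (inl (ofAdd (Pi.single 2 1)))) = inl (ofAdd (Pi.single 2 1))
      rw [ψhom, SemidirectProduct.lift_inl, fM_s2, φ_t]
  · apply MonoidHom.ext_mint
    simp only [MonoidHom.comp_apply, MonoidHom.id_apply]
    show φhom k l (ψhom k l (inr (ofAdd 1))) = inr (ofAdd 1)
    rw [ψhom, SemidirectProduct.lift_inr, zpowersHom_apply]
    simp only [toAdd_ofAdd, zpow_one, φ_y]

end Final


/-- For `k ≥ 1` and `l`, the group `Γ k l` is isomorphic to the semidirect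
product `ℤ³ ⋊_θ ℤ`, where `ℤ³` is free abelian on the images of `z, x, t`, the `ℤ` factor is
generated by `y` acting by conjugation, and the generator of `ℤ` acts on `ℤ³` (in the ordered
basis `z, x, t`) by the unipotent matrix `!![1, -1, -l; 0, 1, -k; 0, 0, 1]`. -/
theorem stmt3 (k l : ℤ) (hk : 1 ≤ k) :
    ∃ e : Γ k l ≃* NilSemidirect k l,
      e (zΓ k l) = SemidirectProduct.inl (Multiplicative.ofAdd (Pi.single 0 1)) ∧
      e (xΓ k l) = SemidirectProduct.inl (Multiplicative.ofAdd (Pi.single 1 1)) ∧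
      e (tΓ k l) = SemidirectProduct.inl (Multiplicative.ofAdd (Pi.single 2 1)) ∧
      e (yΓ k l) = SemidirectProduct.inr (Multiplicative.ofAdd (1 : ℤ)) := by
  refine ⟨MonoidHom.toMulEquiv (φhom k l) (ψhom k l) (ψφ k l) (φψ k l), ?_, ?_, ?_, ?_⟩ <;>
    simp [MonoidHom.toMulEquiv]

end Stmt3
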